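/- For all n ≥ 1, the number of non-crossing permutations of {1,1,...,n,n} avoiding both the pattern 122 and the pattern 132 equals the n-th Catalan number C_n. -/

import Mathlib

/-- A permutation of the multiset {1,1,2,2,...,n,n}, encoded as a function
`Fin (2*n) → Fin n` where the value `v : Fin n` represents `v+1`:
every value appears exactly twice. -/
def IsMultisetPerm {n : ℕ} (π : Fin (2*n) → Fin n) : Prop :=
  ∀ v : Fin n, (Finset.univ.filter fun i => π i = v).card = 2

/-- Non-nesting: no indices i<j<k<l with π_i=π_l, π_j=π_k, π_i≠π_j. -/
def NonNesting {n : ℕ} (π : Fin (2*n) → Fin n) : Prop :=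
  ¬ ∃ i j k l : Fin (2*n), i < j ∧ j < k ∧ k < l ∧
      π i = π l ∧ π j = π k ∧ π i ≠ π j

/-- Non-crossing: no indices i<j<k<l with π_i=π_k, π_j=π_l, π_i≠π_j. -/
def NonCrossing {n : ℕ} (π : Fin (2*n) → Fin n) : Prop :=
  ¬ ∃ i j k l : Fin (2*n), i < j ∧ j < k ∧ k < l ∧
      π i = π k ∧ π j = π l ∧ π i ≠ π j

/-- Avoiding the pattern 231: no i<j<k with π_k < π_i < π_j. -/
def Avoids231 {n : ℕ} (π : Fin (2*n) → Fin n) : Prop :=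
  ¬ ∃ i j k : Fin (2*n), i < j ∧ j < k ∧ π k < π i ∧ π i < π j

/-- Avoiding 122: no i<j<k with π_i < π_j = π_k. -/
def Avoids122 {n : ℕ} (π : Fin (2*n) → Fin n) : Prop :=
  ¬ ∃ i j k : Fin (2*n), i < j ∧ j < k ∧ π i < π j ∧ π j = π k

/-- The first entry is the value 1 (encoded as `0 : Fin n`). -/
def FirstIsOne {n : ℕ} (π : Fin (2*n) → Fin n) : Prop :=
  ∃ h : 0 < n, π ⟨0, by omega⟩ = ⟨0, h⟩

/-- The last entry is the value n (encoded as `n-1 : Fin n`). -/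
def LastIsMax {n : ℕ} (π : Fin (2*n) → Fin n) : Prop :=
  ∃ h : 0 < n, π ⟨2*n - 1, by omega⟩ = ⟨n - 1, by omega⟩

/-- Avoiding 132: no i<j<k with π_i < π_k < π_j. -/
def Avoids132 {n : ℕ} (π : Fin (2*n) → Fin n) : Prop :=
  ¬ ∃ i j k : Fin (2*n), i < j ∧ j < k ∧ π i < π k ∧ π k < π j


open scoped Classical

namespace NC13

def ucnt (w : ℕ → Bool) (i : ℕ) : ℕ := ((Finset.range i).filter (fun j => w j = true)).card

noncomputable def glist (n : ℕ) (w : ℕ → Bool) : ℕ → List ℕ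
  | 0 => []
  | i+1 => glist n w i ++
      [if w i then n - 1 - ucnt w i else sInf {v | (glist n w i).count v = 1}]

noncomputable def gval (n : ℕ) (w : ℕ → Bool) (i : ℕ) : ℕ :=
  if w i then n - 1 - ucnt w i else sInf {v | (glist n w i).count v = 1}

noncomputable def cnt (n : ℕ) (w : ℕ → Bool) (v i : ℕ) : ℕ := (glist n w i).count v

lemma glist_succ (n : ℕ) (w : ℕ → Bool) (i : ℕ) :
    glist n w (i+1) = glist n w i ++ [gval n w i] := by
  simp [glist, gval]

lemma length_glist (n : ℕ) (w : ℕ → Bool) (i : ℕ) : (glist n w i).length = i := by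
  induction i with
  | zero => simp [glist]
  | succ i ih => simp [glist_succ, ih]

lemma cnt_succ (n : ℕ) (w : ℕ → Bool) (v i : ℕ) :
    cnt n w v (i+1) = cnt n w v i + (if gval n w i = v then 1 else 0) := by
  simp [cnt, glist_succ, List.count_append, List.count_singleton', eq_comm]

lemma ucnt_succ (w : ℕ → Bool) (i : ℕ) :
    ucnt w (i+1) = ucnt w i + (if w i then 1 else 0) := by
  simp [ucnt, Finset.range_add_one, Finset.filter_insert]
  split <;> simp [Finset.card_insert_of_notMem, Finset.mem_filter]

lemma ucnt_mono (w : ℕ → Bool) : Monotone (ucnt w) := by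
  intro a b hab
  exact Finset.card_le_card (Finset.filter_subset_filter _ (Finset.range_subset_range.mpr hab))

lemma ucnt_le (w : ℕ → Bool) (i : ℕ) : ucnt w i ≤ i := by
  simpa [ucnt] using Finset.card_le_card (Finset.filter_subset (fun j => w j = true) (Finset.range i))

section Main

variable {n : ℕ} {w : ℕ → Bool}

/-- the "open" values after `i` steps -/
noncomputable def opens (n : ℕ) (w : ℕ → Bool) (i : ℕ) : Finset ℕ :=
  (Finset.range n).filter (fun v => cnt n w v i = 1)

variable (hbal : ∀ i ≤ 2*n, i ≤ 2 * ucnt w i) (htot : ucnt w (2*n) = n)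

include hbal htot in
lemma main_inv : ∀ i ≤ 2*n,
    (∀ v, cnt n w v i ≤ 2) ∧
    (∀ v, 1 ≤ cnt n w v i ↔ (n - ucnt w i ≤ v ∧ v < n)) ∧
    (opens n w i).card = 2 * ucnt w i - i := by
  intro i
  induction i with
  | zero =>
    intro _
    refine ⟨fun v => by simp [cnt, glist], fun v => by simp [cnt, glist, ucnt], ?_⟩
    simp [opens, cnt, glist, ucnt, Finset.filter_eq_empty_iff]
  | succ i ih =>
    intro hi1
    obtain ⟨I1, I2, I3⟩ := ih (by omega)
    have hui : ucnt w (i+1) ≤ n := htot ▸ ucnt_mono w hi1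
    have hbi : i ≤ 2 * ucnt w i := hbal i (by omega)
    by_cases hw : w i
    · -- a U step
      have hg : gval n w i = n - 1 - ucnt w i := by simp [gval, hw]
      have hus : ucnt w (i+1) = ucnt w i + 1 := by simp [ucnt_succ, hw]
      have hule : ucnt w i + 1 ≤ n := by omega
      have h0 : cnt n w (gval n w i) i = 0 := by
        by_contra h
        have := (I2 (gval n w i)).mp (by omega)
        omega
      refine ⟨?_, ?_, ?_⟩
      · intro v
        rw [cnt_succ]
        split
        · next h => rw [← h]; omega
        · have := I1 v; omega
      · intro v
        rw [cnt_succ, hus]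
        have h2 := I2 v
        by_cases hv : gval n w i = v
        · subst hv; simp; omega
        · simp [hv]; omega
      · have hins : opens n w (i+1) = insert (gval n w i) (opens n w i) := by
          ext v
          simp only [opens, Finset.mem_insert, Finset.mem_filter, Finset.mem_range, cnt_succ]
          by_cases hv : gval n w i = v
          · have hglt : gval n w i < n := by rw [hg]; omega
            rw [← hv, h0]
            simp [hglt, hv]
            all_goals omega
          · simp [hv, Ne.symm hv]
        rw [hins, Finset.card_insert_of_notMem (by simp [opens, h0]), I3, hus]
        omega
    · -- a D step
      have hus : ucnt w (i+1) = ucnt w i := by simp [ucnt_succ, hw]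
      have hbi1 : i + 1 ≤ 2 * ucnt w i := by have := hbal (i+1) hi1; omega
      have hne : (opens n w i).Nonempty := by
        rw [← Finset.card_pos, I3]; omega
      obtain ⟨v0, hv0⟩ := hne
      simp only [opens, Finset.mem_filter, Finset.mem_range] at hv0
      have hSne : {v | cnt n w v i = 1}.Nonempty := ⟨v0, hv0.2⟩
      have hgmem : cnt n w (gval n w i) i = 1 := by
        have : gval n w i = sInf {v | cnt n w v i = 1} := by simp [gval, hw]; rfl
        rw [this]; exact Nat.sInf_mem hSne
      refine ⟨?_, ?_, ?_⟩
      · intro v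
        rw [cnt_succ]
        split
        · next h => rw [← h]; omega
        · have := I1 v; omega
      · intro v
        rw [cnt_succ, hus]
        have h2 := I2 v
        by_cases hv : gval n w i = v
        · subst hv; simp; omega
        · simp [hv]; omega
      · have hdel : opens n w (i+1) = (opens n w i).erase (gval n w i) := by
          ext v
          simp only [opens, Finset.mem_erase, Finset.mem_filter, Finset.mem_range, cnt_succ]
          by_cases hv : gval n w i = v
          · subst hv; simp [hgmem]
          · simp [hv, Ne.symm hv]
        have hglt : gval n w i < n := ((I2 (gval n w i)).mp (by omega)).2
        rw [hdel, Finset.card_erase_of_mem (by simp [opens, hgmem, hglt]), I3, hus]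
        omega

lemma glist_eq_map (n : ℕ) (w : ℕ → Bool) (i : ℕ) :
    glist n w i = (List.range i).map (gval n w) := by
  induction i with
  | zero => simp [glist]
  | succ i ih => rw [glist_succ, List.range_succ, List.map_append, ih]; rfl

lemma cnt_mono' (n : ℕ) (w : ℕ → Bool) (v : ℕ) : Monotone (cnt n w v) := by
  apply monotone_nat_of_le_succ
  intro i
  rw [cnt_succ]
  split <;> omega

lemma cnt_pos_iff (n : ℕ) (w : ℕ → Bool) (v i : ℕ) :
    1 ≤ cnt n w v i ↔ ∃ t < i, gval n w t = v := by
  rw [cnt, glist_eq_map]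
  rw [show (1 ≤ List.count v (List.map (gval n w) (List.range i))) ↔
      (0 < List.count v (List.map (gval n w) (List.range i))) from Iff.rfl,
    List.count_pos_iff]
  simp only [List.mem_map, List.mem_range]

lemma cnt_occ_succ (n : ℕ) (w : ℕ → Bool) {v i : ℕ} (h : gval n w i = v) :
    cnt n w v (i+1) = cnt n w v i + 1 := by
  rw [cnt_succ, if_pos h]

include hbal htot in
/-- no value occurs three times among the first `2*n` entries -/
lemma no_three_occ {v t1 t2 t3 : ℕ} (h12 : t1 < t2) (h23 : t2 < t3) (h3 : t3 < 2*n)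
    (e1 : gval n w t1 = v) (e2 : gval n w t2 = v) (e3 : gval n w t3 = v) : False := by
  have c1 : 1 ≤ cnt n w v (t1+1) := by rw [cnt_occ_succ n w e1]; omega
  have c2 : 2 ≤ cnt n w v (t2+1) := by
    rw [cnt_occ_succ n w e2]
    have := cnt_mono' n w v (show t1+1 ≤ t2 by omega)
    omega
  have c3 : 3 ≤ cnt n w v (t3+1) := by
    rw [cnt_occ_succ n w e3]
    have := cnt_mono' n w v (show t2+1 ≤ t3 by omega)
    omega
  have := ((main_inv hbal htot) (t3+1) (by omega)).1 v
  omega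

include hbal htot in
lemma ucnt_succ_le {i : ℕ} (hi : i < 2*n) (hw : w i = true) : ucnt w i + 1 ≤ n := by
  have h1 : ucnt w (i+1) = ucnt w i + 1 := by simp [ucnt_succ, hw]
  have h2 : ucnt w (i+1) ≤ n := htot ▸ ucnt_mono w (by omega)
  omega

include hbal htot in
lemma cnt_gval_U {i : ℕ} (hi : i < 2*n) (hw : w i = true) : cnt n w (gval n w i) i = 0 := by
  obtain ⟨I1, I2, I3⟩ := (main_inv hbal htot) i (by omega)
  have hg : gval n w i = n - 1 - ucnt w i := by simp [gval, hw]
  have := ucnt_succ_le hbal htot hi hw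
  by_contra h
  have := (I2 (gval n w i)).mp (by omega)
  omega

include hbal htot in
lemma gval_D_min {i : ℕ} (hi : i < 2*n) (hw : w i = false) :
    cnt n w (gval n w i) i = 1 ∧ ∀ v, cnt n w v i = 1 → gval n w i ≤ v := by
  obtain ⟨I1, I2, I3⟩ := (main_inv hbal htot) i (by omega)
  have hus : ucnt w (i+1) = ucnt w i := by simp [ucnt_succ, hw]
  have hbi1 : i + 1 ≤ 2 * ucnt w i := by have := hbal (i+1) (by omega); omega
  have hne : (opens n w i).Nonempty := by
    rw [← Finset.card_pos, I3]; omega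
  obtain ⟨v0, hv0⟩ := hne
  simp only [opens, Finset.mem_filter, Finset.mem_range] at hv0
  have hSne : {v | cnt n w v i = 1}.Nonempty := ⟨v0, hv0.2⟩
  have hgdef : gval n w i = sInf {v | cnt n w v i = 1} := by simp [gval, hw]; rfl
  refine ⟨hgdef ▸ Nat.sInf_mem hSne, fun v hv => hgdef ▸ Nat.sInf_le hv⟩

include hbal htot in
lemma isU_iff {i : ℕ} (hi : i < 2*n) : w i = true ↔ cnt n w (gval n w i) i = 0 := by
  constructor
  · exact cnt_gval_U hbal htot hi
  · intro h
    by_contra hw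
    have := (gval_D_min hbal htot hi (by simpa using hw)).1
    omega

include hbal htot in
lemma gval_lt (i : ℕ) (hi : i < 2*n) : gval n w i < n := by
  have h1 : 1 ≤ cnt n w (gval n w i) (i+1) := by rw [cnt_occ_succ n w rfl]; omega
  exact (((main_inv hbal htot) (i+1) (by omega)).2.1 _ |>.mp h1).2

include hbal htot in
/-- every entry strictly before a U position is strictly bigger -/
lemma before_U_gt {t i : ℕ} (ht : t < i) (hi : i < 2*n) (hw : w i = true) :
    gval n w i < gval n w t := by
  have h1 : 1 ≤ cnt n w (gval n w t) (t+1) := by rw [cnt_occ_succ n w rfl]; omega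
  have h2 := (((main_inv hbal htot) (t+1) (by omega)).2.1 _).mp h1
  have hg : gval n w i = n - 1 - ucnt w i := by simp [gval, hw]
  have hmono : ucnt w (t+1) ≤ ucnt w i := ucnt_mono w (by omega)
  have := ucnt_succ_le hbal htot hi hw
  omega

include hbal htot in
/-- first occurrences: positions where `cnt = 0`; they are strictly antitone in value -/
lemma first_anti {t t' v v' : ℕ} (ht : t < 2*n) (ht' : t' < 2*n)
    (h0 : cnt n w v t = 0) (e : gval n w t = v)
    (h0' : cnt n w v' t' = 0) (e' : gval n w t' = v') (hvv : v < v') : t' < t := by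
  have hwt : w t = true := (isU_iff hbal htot ht).mpr (e ▸ h0)
  have hwt' : w t' = true := (isU_iff hbal htot ht').mpr (e' ▸ h0')
  have hg : gval n w t = n - 1 - ucnt w t := by simp [gval, hwt]
  have hg' : gval n w t' = n - 1 - ucnt w t' := by simp [gval, hwt']
  have hb := ucnt_succ_le hbal htot ht hwt
  have hb' := ucnt_succ_le hbal htot ht' hwt'
  by_contra h
  have : ucnt w t ≤ ucnt w t' := ucnt_mono w (by omega)
  omega

omit hbal htot in
/-- existence of a first occurrence -/
lemma exists_first {v p : ℕ} (hp : p < 2*n) (e : gval n w p = v) :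
    ∃ t ≤ p, gval n w t = v ∧ cnt n w v t = 0 := by
  induction p using Nat.strong_induction_on with
  | _ p ih =>
    by_cases h : cnt n w v p = 0
    · exact ⟨p, le_refl _, e, h⟩
    · obtain ⟨t, ht, et⟩ := (cnt_pos_iff n w v p).mp (by omega)
      obtain ⟨s, hs, es, hs0⟩ := ih t ht (by omega) et
      exact ⟨s, by omega, es, hs0⟩

include hbal htot in
lemma cnt_final {v : ℕ} (hv : v < n) : cnt n w v (2*n) = 2 := by
  obtain ⟨I1, I2, I3⟩ := (main_inv hbal htot) (2*n) (le_refl _)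
  have h1 : 1 ≤ cnt n w v (2*n) := (I2 v).mpr ⟨by omega, hv⟩
  have hopens : (opens n w (2*n)).card = 0 := by rw [I3, htot]; omega
  have : v ∉ opens n w (2*n) := by
    rw [Finset.card_eq_zero] at hopens; simp [hopens]
  simp only [opens, Finset.mem_filter, Finset.mem_range] at this
  have := I1 v
  omega

omit hbal htot in
lemma cnt_eq_card (v i : ℕ) :
    cnt n w v i = ((Finset.range i).filter (fun t => gval n w t = v)).card := by
  induction i with
  | zero => simp [cnt, glist]
  | succ i ih =>
    rw [cnt_succ, ih, Finset.range_add_one, Finset.filter_insert]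
    split
    · rw [Finset.card_insert_of_notMem (by simp)]
    · omega

include hbal htot in
/-- if `v` occurs at two known positions `p < q < 2n`, its count up to `j` is determined -/
lemma cnt_formula {v p q j : ℕ} (hpq : p < q) (hq : q < 2*n)
    (ep : gval n w p = v) (eq' : gval n w q = v) (hj : j ≤ 2*n) :
    cnt n w v j = (if p < j then 1 else 0) + (if q < j then 1 else 0) := by
  have hv : v < n := ep ▸ gval_lt hbal htot p (by omega)
  have hcard : ((Finset.range (2*n)).filter (fun t => gval n w t = v)).card = 2 := by
    rw [← cnt_eq_card]; exact cnt_final hbal htot hv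
  have hsub : ({p, q} : Finset ℕ) ⊆ (Finset.range (2*n)).filter (fun t => gval n w t = v) := by
    intro t ht
    simp only [Finset.mem_insert, Finset.mem_singleton] at ht
    rcases ht with rfl | rfl <;> simp [Finset.mem_filter, Finset.mem_range, ep, eq'] <;> omega
  have hpq2 : ({p, q} : Finset ℕ).card = 2 := by
    rw [Finset.card_insert_of_notMem (by simp; omega), Finset.card_singleton]
  have heq : (Finset.range (2*n)).filter (fun t => gval n w t = v) = {p, q} :=
    (Finset.eq_of_subset_of_card_le hsub (by omega)).symm
  have hocc : ∀ t < 2*n, gval n w t = v ↔ (t = p ∨ t = q) := by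
    intro t ht
    have := Finset.ext_iff.mp heq t
    simp only [Finset.mem_filter, Finset.mem_range, Finset.mem_insert, Finset.mem_singleton]
      at this
    constructor
    · intro h; exact this.mp ⟨ht, h⟩
    · rintro (rfl | rfl); exacts [ep, eq']
  rw [cnt_eq_card]
  have hset : (Finset.range j).filter (fun t => gval n w t = v)
      = ({p, q} : Finset ℕ).filter (fun t => t < j) := by
    ext t
    simp only [Finset.mem_filter, Finset.mem_range, Finset.mem_insert, Finset.mem_singleton]
    constructor
    · rintro ⟨htj, hgv⟩
      exact ⟨(hocc t (by omega)).mp hgv, htj⟩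
    · rintro ⟨hpq', htj⟩
      refine ⟨htj, ?_⟩
      rcases hpq' with rfl | rfl; exacts [ep, eq']
  rw [hset, Finset.filter_insert, Finset.filter_singleton]
  by_cases h2 : q < j
  · have h1 : p < j := by omega
    simp only [if_pos h1, if_pos h2]
    rw [Finset.card_pair (by omega)]
  · by_cases h1 : p < j
    · simp [if_pos h1, if_neg h2]
    · simp [if_neg h1, if_neg h2]

include hbal htot in
lemma cond_122 {i j k : ℕ} (hij : i < j) (hjk : j < k) (hk : k < 2*n)
    (e : gval n w j = gval n w k) : ¬ gval n w i < gval n w j := by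
  intro hlt
  have h0 : cnt n w (gval n w j) j = 0 := by
    rw [cnt_formula hbal htot hjk hk rfl e.symm (by omega),
      if_neg (lt_irrefl j), if_neg (show ¬ k < j by omega)]
  have hwj : w j = true := (isU_iff hbal htot (by omega)).mpr h0
  have := before_U_gt hbal htot hij (by omega) hwj
  omega

include hbal htot in
lemma cond_noncross {i j k l : ℕ} (hij : i < j) (hjk : j < k) (hkl : k < l) (hl : l < 2*n)
    (e1 : gval n w i = gval n w k) (e2 : gval n w j = gval n w l) : False := by
  have hak : cnt n w (gval n w i) k = 1 := by
    rw [cnt_formula hbal htot (show i < k by omega) (by omega) rfl e1.symm (by omega),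
      if_pos (show i < k by omega), if_neg (lt_irrefl k)]
  have hbk : cnt n w (gval n w j) k = 1 := by
    rw [cnt_formula hbal htot (show j < l by omega) hl rfl e2.symm (by omega),
      if_pos hjk, if_neg (show ¬ l < k by omega)]
  have hbj : cnt n w (gval n w j) j = 0 := by
    rw [cnt_formula hbal htot (show j < l by omega) hl rfl e2.symm (by omega),
      if_neg (lt_irrefl j), if_neg (show ¬ l < j by omega)]
  have hwk : w k = false := by
    by_contra h
    have := cnt_gval_U hbal htot (i := k) (by omega) (by simpa using h)
    rw [e1] at hak
    omega
  have hmin := (gval_D_min hbal htot (by omega) hwk).2 (gval n w j) hbk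
  rw [← e1] at hmin
  have hwj : w j = true := (isU_iff hbal htot (by omega)).mpr hbj
  have := before_U_gt hbal htot hij (by omega) hwj
  omega

include hbal htot in
lemma cond_132 {i j k : ℕ} (hij : i < j) (hjk : j < k) (hk : k < 2*n) :
    ¬ (gval n w i < gval n w k ∧ gval n w k < gval n w j) := by
  rintro ⟨h1, h2⟩
  have hwj : w j = false := by
    by_contra h
    have := before_U_gt hbal htot hij (by omega) (by simpa using h)
    omega
  obtain ⟨ta, hta, eta, h0a⟩ := exists_first (n := n) (w := w) (v := gval n w i)
    (p := i) (by omega) rfl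
  obtain ⟨tc, htc, etc', h0c⟩ := exists_first (n := n) (w := w) (v := gval n w k)
    (p := k) (by omega) rfl
  have htcta : tc < ta :=
    first_anti hbal htot (by omega) (by omega) h0a eta h0c etc' h1
  have htck : tc < k := by
    rcases Nat.lt_or_ge tc k with h | h
    · exact h
    · have : tc = k := by omega
      subst this
      omega
  have hcj : cnt n w (gval n w k) j = 1 := by
    rw [cnt_formula hbal htot htck hk etc' rfl (by omega),
      if_pos (show tc < j by omega), if_neg (show ¬ k < j by omega)]
  have := (gval_D_min hbal htot (by omega) hwj).2 (gval n w k) hcj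
  omega

omit hbal htot in
lemma ucnt_congr {w' : ℕ → Bool} {i : ℕ} (h : ∀ j < i, w j = w' j) : ucnt w i = ucnt w' i := by
  unfold ucnt
  congr 1
  apply Finset.filter_congr
  intro j hj
  simp only [Finset.mem_range] at hj
  rw [h j hj]

omit hbal htot in
lemma glist_congr {w' : ℕ → Bool} {i : ℕ} (h : ∀ j < i, w j = w' j) :
    glist n w i = glist n w' i := by
  induction i with
  | zero => rfl
  | succ i ih =>
    have hprev : ∀ j < i, w j = w' j := fun j hj => h j (by omega)
    rw [glist_succ, glist_succ, ih hprev]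
    congr 2
    unfold gval
    rw [h i (by omega), ucnt_congr hprev, ih hprev]

omit hbal htot in
lemma gval_congr {w' : ℕ → Bool} {i : ℕ} (h : ∀ j ≤ i, w j = w' j) :
    gval n w i = gval n w' i := by
  unfold gval
  rw [h i (le_refl _), ucnt_congr (fun j hj => h j (by omega)),
    glist_congr (fun j hj => h j (by omega))]

end Main

section Abstract

variable {n : ℕ} {f : ℕ → ℕ}

/-- the word of first occurrences -/
def wf (f : ℕ → ℕ) : ℕ → Bool := fun t => decide (∀ s < t, f s ≠ f t)

lemma wf_iff (t : ℕ) : wf f t = true ↔ ∀ s < t, f s ≠ f t := by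
  simp [wf]

variable (Hlt : ∀ t < 2*n, f t < n)
  (Hocc : ∀ v < n, ∃ p q, p < q ∧ q < 2*n ∧ f p = v ∧ f q = v ∧
    (∀ t < 2*n, f t = v → t = p ∨ t = q))
  (H122 : ∀ i j k : ℕ, i < j → j < k → k < 2*n → f j = f k → ¬ f i < f j)
  (HNC : ∀ i j k l : ℕ, i < j → j < k → k < l → l < 2*n → f i = f k → f j = f l → f i = f j)

include Hocc in
lemma ab_data {v : ℕ} (hv : v < n) : ∃ p q, p < q ∧ q < 2*n ∧ f p = v ∧ f q = v ∧
    (∀ t < 2*n, f t = v → t = p ∨ t = q) ∧ wf f p = true ∧ wf f q = false := by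
  obtain ⟨p, q, hpq, hq, ep, eq', huniq⟩ := Hocc v hv
  refine ⟨p, q, hpq, hq, ep, eq', huniq, ?_, ?_⟩
  · rw [wf_iff]
    intro s hs hfs
    rcases huniq s (by omega) (by rw [hfs, ep]) with rfl | rfl <;> omega
  · simp only [wf, decide_eq_false_iff_not, not_forall]
    exact ⟨p, hpq, by simp [ep, eq']⟩

include Hocc in
/-- a first occurrence is the `p` of its data -/
lemma ab_first_eq {t p q v : ℕ} (ht : t < 2*n) (et : f t = v)
    (hpq : p < q) (hq : q < 2*n) (ep : f p = v) (eq' : f q = v)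
    (huniq : ∀ s < 2*n, f s = v → s = p ∨ s = q)
    (hwt : wf f t = true) : t = p := by
  rcases huniq t ht et with h1 | h1
  · exact h1
  · subst h1
    exact absurd (ep.trans eq'.symm) ((wf_iff _).mp hwt p hpq)

include Hocc in
lemma ab_second_eq {t p q v : ℕ} (ht : t < 2*n) (et : f t = v)
    (hpq : p < q) (hq : q < 2*n) (ep : f p = v) (eq' : f q = v)
    (huniq : ∀ s < 2*n, f s = v → s = p ∨ s = q)
    (hwt : wf f t = false) : t = q := by
  rcases huniq t ht et with h1 | h1
  · exfalso
    have hw : wf f t = true := by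
      rw [wf_iff]
      intro s hs hfs
      rcases huniq s (by omega) (hfs.trans et) with rfl | rfl <;> omega
    rw [hw] at hwt
    simp at hwt
  · exact h1

include Hocc H122 in
/-- first occurrences are antitone in value -/
lemma ab_anti {v v' p q p' q' : ℕ} (hv : v < n) (hv' : v' < n) (hvv : v < v')
    (hpq : p < q) (hq : q < 2*n) (ep : f p = v) (eq' : f q = v)
    (hpq' : p' < q') (hq' : q' < 2*n) (ep' : f p' = v') (eq2 : f q' = v') : p' < p := by
  by_contra h
  have hne : p ≠ p' := fun he => by rw [he, ep'] at ep; omega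
  have hlt : p < p' := by omega
  exact H122 p p' q' hlt hpq' hq' (by rw [ep', eq2]) (by rw [ep, ep']; omega)

include Hlt Hocc in
lemma ab_htot : ucnt (wf f) (2*n) = n := by
  have : ((Finset.range (2*n)).filter (fun t => wf f t = true)).card
      = (Finset.range n).card := by
    apply Finset.card_bij (fun t _ => f t)
    · intro a ha
      simp only [Finset.mem_filter, Finset.mem_range] at ha ⊢
      exact Hlt a ha.1
    · intro a ha a' ha' hfa
      simp only [Finset.mem_filter, Finset.mem_range] at ha ha'
      rcases lt_trichotomy a a' with h | h | h
      · exact absurd hfa ((wf_iff a').mp ha'.2 a h)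
      · exact h
      · exact absurd hfa.symm ((wf_iff a).mp ha.2 a' h)
    · intro v hv
      simp only [Finset.mem_range] at hv
      obtain ⟨p, q, hpq, hq, ep, eq', huniq, hwp, hwq⟩ := ab_data Hocc hv
      exact ⟨p, by simp only [Finset.mem_filter, Finset.mem_range]; exact ⟨by omega, hwp⟩, ep⟩
  rw [ucnt, this, Finset.card_range]

include Hlt Hocc H122 in
lemma ab_A {i : ℕ} (hi : i < 2*n) (hw : wf f i = true) :
    ucnt (wf f) i = n - (f i + 1) := by
  have hfi : f i < n := Hlt i hi
  obtain ⟨p, q, hpq, hq, ep, eq', huniq, hwp, hwq⟩ := ab_data Hocc hfi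
  have hip : i = p := ab_first_eq Hocc hi rfl hpq hq ep eq' huniq hw
  have : ((Finset.range i).filter (fun t => wf f t = true)).card
      = (Finset.Ico (f i + 1) n).card := by
    apply Finset.card_bij (fun t _ => f t)
    · intro a ha
      simp only [Finset.mem_filter, Finset.mem_range] at ha
      simp only [Finset.mem_Ico]
      have ha2n : a < 2*n := by omega
      refine ⟨?_, Hlt a ha2n⟩
      have hne : f a ≠ f i := (wf_iff i).mp hw a ha.1
      by_contra hcon
      have hlt : f a < f i := by omega
      exact H122 a i q (by omega) (by omega) hq (by rw [eq']) hlt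
    · intro a ha a' ha' hfa
      simp only [Finset.mem_filter, Finset.mem_range] at ha ha'
      rcases lt_trichotomy a a' with h | h | h
      · exact absurd hfa ((wf_iff a').mp ha'.2 a h)
      · exact h
      · exact absurd hfa.symm ((wf_iff a).mp ha.2 a' h)
    · intro v hv
      simp only [Finset.mem_Ico] at hv
      obtain ⟨pv, qv, hpqv, hqv, epv, eqv, huniqv, hwpv, hwqv⟩ := ab_data Hocc hv.2
      have hlt : pv < p :=
        ab_anti Hocc H122 hfi hv.2 (by omega) hpq hq ep eq' hpqv hqv epv eqv
      exact ⟨pv, by simp only [Finset.mem_filter, Finset.mem_range]; exact ⟨by omega, hwpv⟩, epv⟩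
  rw [ucnt, this, Nat.card_Ico]

include Hlt Hocc in
lemma ab_hbal : ∀ i ≤ 2*n, i ≤ 2 * ucnt (wf f) i := by
  intro i hi
  classical
  set U := (Finset.range i).filter (fun t => wf f t = true) with hU
  set D := (Finset.range i).filter (fun t => ¬ wf f t = true) with hD
  have hsplit : U.card + D.card = i := by
    rw [hU, hD, Finset.card_filter_add_card_filter_not, Finset.card_range]
  have hDU : D.card ≤ U.card := by
    apply Finset.card_le_card_of_injOn
      (fun t => if h : f t < n then (Hocc (f t) h).choose else 0)
    · intro t ht
      simp only [hD, Finset.mem_coe, Finset.mem_filter, Finset.mem_range] at ht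
      have ht2n : t < 2*n := by omega
      have hft : f t < n := Hlt t ht2n
      obtain ⟨q, hpq, hq, ep, eq', huniq⟩ := (Hocc (f t) hft).choose_spec
      set p := (Hocc (f t) hft).choose with hp
      have hwp : wf f p = true := by
        rw [wf_iff]
        intro s hs hfs
        rcases huniq s (by omega) (hfs.trans ep) with rfl | rfl <;> omega
      have htq : t = q := ab_second_eq Hocc ht2n rfl hpq hq ep eq' huniq
        (Bool.eq_false_iff.mpr ht.2)
      simp only [dif_pos hft, ← hp]
      simp only [hU, Finset.mem_coe, Finset.mem_filter, Finset.mem_range]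
      exact ⟨by omega, hwp⟩
    · intro t ht t' ht' hg
      simp only [hD, Finset.coe_filter, Set.mem_setOf_eq, Finset.mem_range] at ht ht'
      have ht2n : t < 2*n := by omega
      have ht2n' : t' < 2*n := by omega
      have hft : f t < n := Hlt t ht2n
      have hft' : f t' < n := Hlt t' ht2n'
      obtain ⟨q, hpq, hq, ep, eq', huniq⟩ := (Hocc (f t) hft).choose_spec
      obtain ⟨q2, hpq2, hq2, ep2, eq2, huniq2⟩ := (Hocc (f t') hft').choose_spec
      simp only [dif_pos hft, dif_pos hft'] at hg
      have hfeq : f t = f t' := by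
        rw [← ep, ← ep2, hg]
      have htq : t = q := ab_second_eq Hocc ht2n rfl hpq hq ep eq' huniq
        (Bool.eq_false_iff.mpr ht.2)
      -- t' is an occurrence of f t, and it is not the first occurrence
      have hwp : wf f (Hocc (f t) hft).choose = true := by
        rw [wf_iff]
        intro s hs hfs
        rcases huniq s (by omega) (hfs.trans ep) with rfl | rfl <;> omega
      rcases huniq t' ht2n' hfeq.symm with h1 | h1
      · rw [← h1] at hwp
        exact absurd hwp (Bool.eq_false_iff.mpr ht'.2 ▸ by simp [Bool.eq_false_iff.mpr ht'.2])
      · omega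
  have hU2 : U.card = ucnt (wf f) i := rfl
  omega

include Hlt Hocc H122 HNC in
lemma ab_uniq : ∀ i < 2*n, gval n (wf f) i = f i := by
  intro i
  induction i using Nat.strong_induction_on with
  | _ i IH =>
    intro hi
    have hcnt : ∀ v, cnt n (wf f) v i = ((Finset.range i).filter (fun t => f t = v)).card := by
      intro v
      rw [cnt_eq_card]
      congr 1
      apply Finset.filter_congr
      intro t ht
      simp only [Finset.mem_range] at ht
      rw [IH t ht (by omega)]
    by_cases hw : wf f i = true
    · have h1 : gval n (wf f) i = n - 1 - ucnt (wf f) i := by simp [gval, hw]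
      rw [h1, ab_A Hlt Hocc H122 hi hw]
      have := Hlt i hi
      omega
    · have hwf : wf f i = false := Bool.eq_false_iff.mpr hw
      have h1 : gval n (wf f) i = sInf {v | cnt n (wf f) v i = 1} := by
        simp [gval, hwf]; rfl
      have hfi : f i < n := Hlt i hi
      obtain ⟨p, q, hpq, hq, ep, eq', huniq, hwp, hwq⟩ := ab_data Hocc hfi
      have hiq : i = q := ab_second_eq Hocc hi rfl hpq hq ep eq' huniq hwf
      have hmem : cnt n (wf f) (f i) i = 1 := by
        rw [hcnt]
        have : (Finset.range i).filter (fun t => f t = f i) = {p} := by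
          ext t
          simp only [Finset.mem_filter, Finset.mem_range, Finset.mem_singleton]
          constructor
          · rintro ⟨htl, hte⟩
            rcases huniq t (by omega) hte with h | h
            · exact h
            · omega
          · rintro rfl
            exact ⟨by omega, ep⟩
        rw [this, Finset.card_singleton]
      have hlb : ∀ v ∈ {v | cnt n (wf f) v i = 1}, f i ≤ v := by
        intro v hv
        simp only [Set.mem_setOf_eq, hcnt] at hv
        by_contra hcon
        have hvlt : v < f i := by omega
        obtain ⟨t, htmem⟩ := Finset.card_pos.mp (by omega : 0 < ((Finset.range i).filter
          (fun t => f t = v)).card)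
        simp only [Finset.mem_filter, Finset.mem_range] at htmem
        have hvn : v < n := by omega
        obtain ⟨pv, qv, hpqv, hqv, epv, eqv, huniqv, hwpv, hwqv⟩ := ab_data Hocc hvn
        have hqvgt : i < qv := by
          rcases Nat.lt_trichotomy qv i with h | h | h
          · -- both occurrences before i: card ≥ 2, contradiction
            exfalso
            have hsub : ({pv, qv} : Finset ℕ) ⊆ (Finset.range i).filter (fun t => f t = v) := by
              intro s hs
              simp only [Finset.mem_insert, Finset.mem_singleton] at hs
              simp only [Finset.mem_filter, Finset.mem_range]
              rcases hs with rfl | rfl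
              · exact ⟨by omega, epv⟩
              · exact ⟨h, eqv⟩
            have := Finset.card_le_card hsub
            rw [Finset.card_pair (by omega)] at this
            omega
          · exfalso
            rw [h] at eqv
            omega
          · exact h
        have hpvlt : pv < i := by
          rcases huniqv t (by omega) htmem.2 with h | h
          · omega
          · omega
        have hppv : p < pv :=
          ab_anti Hocc H122 hvn hfi hvlt hpqv hqv epv eqv hpq hq ep eq'
        have := HNC p pv i qv hppv hpvlt hqvgt hqv ep
          (by rw [epv, eqv])
        rw [ep, epv] at this
        omega
      have hSne : ({v | cnt n (wf f) v i = 1} : Set ℕ).Nonempty := ⟨f i, hmem⟩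
      rw [h1]
      exact Nat.le_antisymm (Nat.sInf_le hmem) (le_csInf hSne hlb)

end Abstract

section Glue

open DyckStep

/-- boolean word from a Dyck step list -/
def wlist (l : List DyckStep) : ℕ → Bool := fun i => decide (l.getD i D = U)

lemma dyck_length_eq (l : List DyckStep) : l.length = l.count U + l.count D := by
  induction l with
  | nil => simp
  | cons a l ih =>
    cases a <;> simp [List.count_cons, ih] <;> omega

lemma ucnt_wlist (l : List DyckStep) (i : ℕ) :
    ucnt (wlist l) i = (l.take i).count U := by
  induction i with
  | zero => simp [ucnt]
  | succ i ih =>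
    rw [ucnt_succ, ih, List.take_succ, List.count_append]
    congr 1
    have hgd : l.getD i D = (l[i]?).getD D := List.getD_eq_getElem?_getD
    cases h : l[i]? with
    | none => simp [wlist, hgd, h]
    | some a =>
      cases a <;> simp [wlist, hgd, h]

lemma wlist_ofFn {m : ℕ} (g : ℕ → Bool) (i : ℕ) (hi : i < m) :
    wlist (List.ofFn (fun j : Fin m => if g j.val then U else D)) i = g i := by
  unfold wlist
  rw [List.getD_eq_getElem?_getD, List.getElem?_ofFn]
  rw [dif_pos hi]
  by_cases h : g i <;> simp [h]

variable {n : ℕ}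

lemma dyck_hbal (p : DyckWord) (hsl : p.semilength = n) :
    ∀ i ≤ 2*n, i ≤ 2 * ucnt (wlist p.toList) i := by
  have hlen : p.toList.length = 2*n := by
    have := p.two_mul_semilength_eq_length
    omega
  intro i hi
  rw [ucnt_wlist]
  have h1 := p.count_D_le_count_U i
  have h2 : (p.toList.take i).length = i := by
    rw [List.length_take, hlen]; omega
  have h3 := dyck_length_eq (p.toList.take i)
  omega

lemma dyck_htot (p : DyckWord) (hsl : p.semilength = n) :
    ucnt (wlist p.toList) (2*n) = n := by
  have hlen : p.toList.length = 2*n := by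
    have := p.two_mul_semilength_eq_length
    omega
  rw [ucnt_wlist, ← hlen, List.take_length]
  exact hsl

/-- conversion between Fin-filter cardinality and range-filter cardinality -/
lemma card_fin_filter {m : ℕ} (P : ℕ → Prop) [DecidablePred P]
    [DecidablePred (fun i : Fin m => P i.val)] :
    (Finset.univ.filter (fun i : Fin m => P i.val)).card
      = ((Finset.range m).filter P).card := by
  apply Finset.card_bij (fun i _ => i.val)
  · intro a ha
    simp only [Finset.mem_filter, Finset.mem_univ, true_and] at ha
    simp only [Finset.mem_filter, Finset.mem_range]
    exact ⟨a.isLt, ha⟩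
  · intro a _ a' _ h
    exact Fin.ext h
  · intro t ht
    simp only [Finset.mem_filter, Finset.mem_range] at ht
    exact ⟨⟨t, ht.1⟩, by simp [ht.2], rfl⟩

end Glue

section BPerm

open DyckStep

variable {n : ℕ} {w : ℕ → Bool}

/-- the permutation built from a word -/
noncomputable def bPerm (hbal : ∀ i ≤ 2*n, i ≤ 2 * ucnt w i) (htot : ucnt w (2*n) = n) :
    Fin (2*n) → Fin n :=
  fun i => ⟨gval n w i.val, gval_lt hbal htot i.val i.isLt⟩

variable (hbal : ∀ i ≤ 2*n, i ≤ 2 * ucnt w i) (htot : ucnt w (2*n) = n)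

lemma bPerm_card (v : Fin n) :
    (Finset.univ.filter (fun i : Fin (2*n) => bPerm hbal htot i = v)).card = 2 := by
  classical
  have h1 : (Finset.univ.filter (fun i : Fin (2*n) => bPerm hbal htot i = v))
      = (Finset.univ.filter (fun i : Fin (2*n) => gval n w i.val = v.val)) := by
    apply Finset.filter_congr
    intro i _
    simp only [bPerm, Fin.ext_iff]
  rw [h1, card_fin_filter (fun t => gval n w t = v.val), ← cnt_eq_card]
  exact cnt_final hbal htot v.isLt

include hbal htot in
lemma word_determined {w' : ℕ → Bool}
    (hbal' : ∀ i ≤ 2*n, i ≤ 2 * ucnt w' i) (htot' : ucnt w' (2*n) = n)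
    (hg : ∀ t < 2*n, gval n w t = gval n w' t) :
    ∀ i < 2*n, w i = w' i := by
  intro i hi
  have hcnt : ∀ v, cnt n w v i = cnt n w' v i := by
    intro v
    rw [cnt_eq_card, cnt_eq_card]
    congr 1
    apply Finset.filter_congr
    intro t ht
    simp only [Finset.mem_range] at ht
    rw [hg t (by omega)]
  have h1 := isU_iff hbal htot hi
  have h2 := isU_iff hbal' htot' hi
  apply Bool.coe_iff_coe.mp
  rw [h1, h2, hcnt, hg i hi]

end BPerm

end NC13

theorem stmt13 (n : ℕ) (hn : 1 ≤ n) :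
    Nat.card {π : Fin (2*n) → Fin n //
      IsMultisetPerm π ∧ NonCrossing π ∧ Avoids122 π ∧ Avoids132 π} =
      Nat.choose (2*n) n / (n+1) := by
  classical
  open NC13 DyckStep in
  have key : Nat.card {p : DyckWord // p.semilength = n} =
      Nat.card {π : Fin (2*n) → Fin n //
        IsMultisetPerm π ∧ NonCrossing π ∧ Avoids122 π ∧ Avoids132 π} := by
    apply Nat.card_eq_of_bijective
      (f := fun p => ⟨bPerm (dyck_hbal p.1 p.2) (dyck_htot p.1 p.2),
        -- IsMultisetPerm
        fun v => bPerm_card _ _ v,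
        -- NonCrossing
        by
          rintro ⟨i, j, k, l, hij, hjk, hkl, e1, e2, hne⟩
          exact cond_noncross (dyck_hbal p.1 p.2) (dyck_htot p.1 p.2)
            (Fin.lt_def.mp hij) (Fin.lt_def.mp hjk) (Fin.lt_def.mp hkl) l.isLt
            (congrArg Fin.val e1) (congrArg Fin.val e2),
        -- Avoids122
        by
          rintro ⟨i, j, k, hij, hjk, hlt, heq⟩
          exact cond_122 (dyck_hbal p.1 p.2) (dyck_htot p.1 p.2)
            (Fin.lt_def.mp hij) (Fin.lt_def.mp hjk) k.isLt
            (congrArg Fin.val heq) (Fin.lt_def.mp hlt),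
        -- Avoids132
        by
          rintro ⟨i, j, k, hij, hjk, h1, h2⟩
          exact cond_132 (dyck_hbal p.1 p.2) (dyck_htot p.1 p.2)
            (Fin.lt_def.mp hij) (Fin.lt_def.mp hjk) k.isLt
            ⟨Fin.lt_def.mp h1, Fin.lt_def.mp h2⟩⟩)
    constructor
    · -- injective
      rintro ⟨p, hp⟩ ⟨p', hp'⟩ hFeq
      have hg : ∀ t < 2*n, gval n (wlist p.toList) t = gval n (wlist p'.toList) t := by
        intro t ht
        have := congrArg (fun z => (z.1 ⟨t, ht⟩ : Fin n).val) hFeq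
        simpa [bPerm] using this
      have hwd := word_determined (dyck_hbal p hp) (dyck_htot p hp)
        (dyck_hbal p' hp') (dyck_htot p' hp') hg
      have hlen : p.toList.length = 2*n := by
        have := p.two_mul_semilength_eq_length; omega
      have hlen' : p'.toList.length = 2*n := by
        have := p'.two_mul_semilength_eq_length; omega
      apply Subtype.ext
      show p = p'
      apply DyckWord.ext
      apply List.ext_getElem (by omega)
      intro i h1 h2
      have hi : i < 2*n := by omega
      have hwli : wlist p.toList i = wlist p'.toList i := hwd i hi
      unfold wlist at hwli
      rw [List.getD_eq_getElem?_getD, List.getD_eq_getElem?_getD,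
        List.getElem?_eq_getElem h1, List.getElem?_eq_getElem h2] at hwli
      simp only [Option.getD_some] at hwli
      cases hc : p.toList[i] <;> cases hc' : p'.toList[i] <;>
        rw [hc, hc'] at hwli <;> simp_all
    · -- surjective
      rintro ⟨π, hm, hnc, h122, h132⟩
      set f : ℕ → ℕ := fun t => if h : t < 2*n then (π ⟨t, h⟩ : ℕ) else 0 with hf
      have Hlt : ∀ t < 2*n, f t < n := by
        intro t ht
        simp only [hf, dif_pos ht]
        exact (π ⟨t, ht⟩).isLt
      have Hocc : ∀ v < n, ∃ p q, p < q ∧ q < 2*n ∧ f p = v ∧ f q = v ∧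
          (∀ t < 2*n, f t = v → t = p ∨ t = q) := by
        intro v hv
        have hcard := hm ⟨v, hv⟩
        obtain ⟨a, b, hab, hset⟩ := Finset.card_eq_two.mp hcard
        have hmem : ∀ x : Fin (2*n), π x = ⟨v, hv⟩ ↔ (x = a ∨ x = b) := by
          intro x
          have := Finset.ext_iff.mp hset x
          simpa using this
        have hfa : f a.val = v := by
          simp only [hf, dif_pos a.isLt]
          have : π a = ⟨v, hv⟩ := (hmem a).mpr (Or.inl rfl)
          simp [Fin.mk_val, this]
        have hfb : f b.val = v := by
          simp only [hf, dif_pos b.isLt]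
          have : π b = ⟨v, hv⟩ := (hmem b).mpr (Or.inr rfl)
          simp [Fin.mk_val, this]
        have huniq : ∀ t < 2*n, f t = v → t = a.val ∨ t = b.val := by
          intro t ht hft
          have hπ : π ⟨t, ht⟩ = ⟨v, hv⟩ := by
            apply Fin.ext
            simp only [hf, dif_pos ht] at hft
            exact hft
          rcases (hmem ⟨t, ht⟩).mp hπ with h | h
          · left; exact congrArg Fin.val h
          · right; exact congrArg Fin.val h
        rcases lt_or_gt_of_ne hab with h | h
        · exact ⟨a.val, b.val, Fin.lt_def.mp h, b.isLt, hfa, hfb, huniq⟩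
        · refine ⟨b.val, a.val, Fin.lt_def.mp h, a.isLt, hfb, hfa, ?_⟩
          intro t ht hft
          exact (huniq t ht hft).symm
      have H122 : ∀ i j k : ℕ, i < j → j < k → k < 2*n → f j = f k → ¬ f i < f j := by
        intro i j k hij hjk hk he hlt
        apply h122
        refine ⟨⟨i, by omega⟩, ⟨j, by omega⟩, ⟨k, hk⟩, Fin.mk_lt_mk.mpr hij,
          Fin.mk_lt_mk.mpr hjk, ?_, ?_⟩
        · rw [Fin.lt_def]
          simpa only [hf, dif_pos (show i < 2*n by omega), dif_pos (show j < 2*n by omega)]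
            using hlt
        · apply Fin.ext
          simpa only [hf, dif_pos (show j < 2*n by omega), dif_pos hk] using he
      have HNC : ∀ i j k l : ℕ, i < j → j < k → k < l → l < 2*n →
          f i = f k → f j = f l → f i = f j := by
        intro i j k l hij hjk hkl hl e1 e2
        by_contra hne
        apply hnc
        refine ⟨⟨i, by omega⟩, ⟨j, by omega⟩, ⟨k, by omega⟩, ⟨l, hl⟩,
          Fin.mk_lt_mk.mpr hij, Fin.mk_lt_mk.mpr hjk, Fin.mk_lt_mk.mpr hkl, ?_, ?_, ?_⟩
        · apply Fin.ext
          simpa only [hf, dif_pos (show i < 2*n by omega), dif_pos (show k < 2*n by omega)]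
            using e1
        · apply Fin.ext
          simpa only [hf, dif_pos (show j < 2*n by omega), dif_pos hl] using e2
        · intro hcon
          apply hne
          have := congrArg Fin.val hcon
          simpa only [hf, dif_pos (show i < 2*n by omega), dif_pos (show j < 2*n by omega)]
            using this
      have hbal' := ab_hbal Hlt Hocc
      have htot' := ab_htot Hlt Hocc
      have huniq := ab_uniq Hlt Hocc H122 HNC
      set l : List DyckStep := List.ofFn (fun i : Fin (2*n) => if wf f i.val then U else D)
        with hl
      have hlen : l.length = 2*n := by simp [hl]
      have hwl : ∀ i < 2*n, wlist l i = wf f i := fun i hi => wlist_ofFn (wf f) i hi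
      have hucnt : ∀ i ≤ 2*n, ucnt (wlist l) i = ucnt (wf f) i := by
        intro i hi
        exact ucnt_congr (fun j hj => hwl j (by omega))
      have hcU : l.count U = n := by
        have h1 : l.count U = (l.take (2*n)).count U := by
          rw [← hlen, List.take_length]
        rw [h1, ← ucnt_wlist, hucnt (2*n) (le_refl _), htot']
      have hcD : l.count D = n := by
        have := dyck_length_eq l
        omega
      have hpre : ∀ i, (l.take i).count D ≤ (l.take i).count U := by
        intro i
        rcases le_or_gt i (2*n) with hi | hi
        · have h2 : (l.take i).length = i := by
            rw [List.length_take, hlen]; omega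
          have h3 := dyck_length_eq (l.take i)
          have h4 : (l.take i).count U = ucnt (wf f) i := by
            rw [← ucnt_wlist, hucnt i hi]
          have h5 := hbal' i hi
          omega
        · have h6 : l.take i = l := List.take_of_length_le (by omega)
          rw [h6, hcU, hcD]
      set p : DyckWord := ⟨l, by rw [hcU, hcD], hpre⟩ with hp
      have hsl : p.semilength = n := by
        simp only [DyckWord.semilength, hp]
        exact hcU
      refine ⟨⟨p, hsl⟩, ?_⟩
      apply Subtype.ext
      simp only
      funext i
      apply Fin.ext
      show gval n (wlist p.toList) i.val = (π i : ℕ)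
      have hgc : gval n (wlist p.toList) i.val = gval n (wf f) i.val := by
        apply gval_congr
        intro j hj
        exact hwl j (by omega)
      rw [hgc, huniq i.val i.isLt]
      simp only [hf, dif_pos i.isLt]
  rw [← key, Nat.card_eq_fintype_card, DyckWord.card_dyckWord_semilength_eq_catalan,
    catalan_eq_centralBinom_div, Nat.centralBinom]
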